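/- Let (a_n) be a sequence of non-negative reals with a_n ≤ c · Σ_{i+j=n, i,j≥1} a_i a_j for all n ≥ 2, where c > 0 and a_1 > 0. Then the power series Σ_{n≥1} a_n ζ^n converges absolutely for all complex ζ with |ζ| < 1/(4 c a_1). -/

import Mathlib

open Finset

lemma catalan_le_four_pow (n : ℕ) : catalan n ≤ 4 ^ n := by
  have h1 : catalan n ≤ n.centralBinom := by
    rw [← succ_mul_catalan_eq_centralBinom]
    exact Nat.le_mul_of_pos_left _ n.succ_pos
  have h2 : n.centralBinom ≤ 4 ^ n := by
    rw [Nat.centralBinom_eq_two_mul_choose]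
    calc (2 * n).choose n ≤ ∑ m ∈ range (2 * n + 1), (2 * n).choose m :=
          Finset.single_le_sum (fun i _ => Nat.zero_le _) (by simp [Nat.lt_succ_iff]; omega)
      _ = 2 ^ (2 * n) := Nat.sum_range_choose (2 * n)
      _ = 4 ^ n := by rw [pow_mul]; norm_num
  exact h1.trans h2

set_option maxHeartbeats 1000000 in
/-- If a sequence of nonnegative reals satisfies `a n ≤ c * ∑_{i+j=n, i,j≥1} a i * a j` for
`n ≥ 2`, with `c > 0` and `a 1 > 0`, then `∑_{n ≥ 1} a n ζ^n` converges absolutely for all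
complex `ζ` with `|ζ| < 1/(4 c a₁)`. -/
theorem stmt2 (a : ℕ → ℝ) (c : ℝ) (hc : 0 < c) (ha : ∀ n, 0 ≤ a n) (ha1 : 0 < a 1)
    (hrec : ∀ n, 2 ≤ n → a n ≤ c * ∑ i ∈ Finset.Ioo 0 n, a i * a (n - i)) :
    ∀ ζ : ℂ, ‖ζ‖ < 1 / (4 * c * a 1) →
      Summable (fun n : ℕ => ‖(a (n + 1) : ℂ) * ζ ^ (n + 1)‖) := by
  -- key bound: a n ≤ c^(n-1) * (a 1)^n * catalan (n-1) for n ≥ 1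
  have key : ∀ n, 1 ≤ n → a n ≤ c ^ (n - 1) * a 1 ^ n * catalan (n - 1) := by
    intro n
    induction n using Nat.strong_induction_on with
    | _ n ih =>
      intro hn
      rcases Nat.lt_or_ge n 2 with h2 | h2
      · interval_cases n
        simp
      · have hsum : ∑ i ∈ Finset.Ioo 0 n, a i * a (n - i) ≤
            ∑ i ∈ Finset.Ioo 0 n,
              (c ^ (i - 1) * a 1 ^ i * catalan (i - 1)) *
              (c ^ (n - i - 1) * a 1 ^ (n - i) * catalan (n - i - 1)) := by
          apply Finset.sum_le_sum
          intro i hi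
          simp only [Finset.mem_Ioo] at hi
          have h1 := ih i (by omega) (by omega)
          have h2 := ih (n - i) (by omega) (by omega)
          have hb1 : 0 ≤ c ^ (i - 1) * a 1 ^ i * (catalan (i - 1) : ℝ) := by positivity
          exact mul_le_mul h1 h2 (ha _) hb1
        have heq : ∑ i ∈ Finset.Ioo 0 n,
              (c ^ (i - 1) * a 1 ^ i * (catalan (i - 1) : ℝ)) *
              (c ^ (n - i - 1) * a 1 ^ (n - i) * catalan (n - i - 1))
            = c ^ (n - 2) * a 1 ^ n * catalan (n - 1) := by
          have hcat : (catalan (n - 1) : ℝ) =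
              ∑ i ∈ Finset.range (n - 1), (catalan i : ℝ) * catalan (n - 2 - i) := by
            have hh : n - 1 = (n - 2) + 1 := by omega
            rw [hh, catalan_succ,
              Fin.sum_univ_eq_sum_range (fun i => catalan i * catalan (n - 2 - i))]
            push_cast
            rfl
          rw [hcat, Finset.mul_sum]
          rw [← Finset.Ico_add_one_left_eq_Ioo, Finset.sum_Ico_eq_sum_range, zero_add]
          apply Finset.sum_congr rfl
          intro i hi
          simp only [Finset.mem_range] at hi
          have e1 : 1 + i - 1 = i := by omega
          have e2 : n - (1 + i) - 1 = n - 2 - i := by omega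
          have e3 : n - (1 + i) = n - 1 - i := by omega
          rw [e1, e2, e3]
          have ea : a 1 ^ (1 + i) * a 1 ^ (n - 1 - i) = a 1 ^ n := by
            rw [← pow_add]; congr 1; omega
          have ec : c ^ i * c ^ (n - 2 - i) = c ^ (n - 2) := by
            rw [← pow_add]; congr 1; omega
          calc c ^ i * a 1 ^ (1 + i) * (catalan i : ℝ) *
                (c ^ (n - 2 - i) * a 1 ^ (n - 1 - i) * (catalan (n - 2 - i) : ℝ))
              = (c ^ i * c ^ (n - 2 - i)) * (a 1 ^ (1 + i) * a 1 ^ (n - 1 - i)) *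
                ((catalan i : ℝ) * catalan (n - 2 - i)) := by ring
            _ = c ^ (n - 2) * a 1 ^ n * ((catalan i : ℝ) * catalan (n - 2 - i)) := by
                rw [ea, ec]
        calc a n ≤ c * ∑ i ∈ Finset.Ioo 0 n, a i * a (n - i) := hrec n h2
          _ ≤ c * (c ^ (n - 2) * a 1 ^ n * catalan (n - 1)) := by
              rw [← heq]; exact mul_le_mul_of_nonneg_left hsum hc.le
          _ = c ^ (n - 1) * a 1 ^ n * catalan (n - 1) := by
              rw [← mul_assoc, ← mul_assoc, ← pow_succ']; congr 3; omega
  intro ζ hζ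
  set r := ‖ζ‖ with hr
  have hr0 : 0 ≤ r := norm_nonneg ζ
  -- bound terms by geometric series a1 * (4*c*a1*r)^n * r
  have hq : 4 * c * a 1 * r < 1 := by
    have h4 : 0 < 4 * c * a 1 := by positivity
    rw [lt_div_iff₀ h4] at hζ
    nlinarith
  refine Summable.of_nonneg_of_le (f := fun n => (a 1 * r) * (4 * c * a 1 * r) ^ n)
    (fun n => norm_nonneg _) ?_ ?_
  · intro n
    rw [norm_mul, norm_pow, Complex.norm_real, ← hr,
      Real.norm_eq_abs, abs_of_nonneg (ha _)]
    have hb : a (n + 1) ≤ c ^ n * a 1 ^ (n + 1) * catalan n := by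
      simpa using key (n + 1) (by omega)
    have hcat : (catalan n : ℝ) ≤ 4 ^ n := by exact_mod_cast catalan_le_four_pow n
    calc a (n + 1) * r ^ (n + 1) ≤ (c ^ n * a 1 ^ (n + 1) * catalan n) * r ^ (n + 1) := by
          apply mul_le_mul_of_nonneg_right hb (by positivity)
      _ ≤ (c ^ n * a 1 ^ (n + 1) * 4 ^ n) * r ^ (n + 1) := by
          apply mul_le_mul_of_nonneg_right _ (by positivity)
          apply mul_le_mul_of_nonneg_left hcat (by positivity)
      _ = (a 1 * r) * (4 * c * a 1 * r) ^ n := by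
          rw [mul_pow, mul_pow, pow_succ, pow_succ]; ring
  · exact (summable_geometric_of_lt_one (by positivity) hq).mul_left _
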